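/- If 0 < δ_M < 2 ln 2 - 1 (resp. 1/2 < δ_M < 1), where δ_M is the fractional part of M > 1, then the integer minimizer of n ↦ ln n + M/n is ⌊M⌋ (resp. ⌈M⌉). -/

import Mathlib

open Real

lemma log_ratio_bound (t : ℝ) (h0 : 0 ≤ t) (h1 : t < 1) :
    |Real.log (1+t) - Real.log (1-t) - (2*t + 2*t^3/3)| ≤ 2*t^4/(1-t) := by
  have habs : |t| < 1 := by rwa [abs_of_nonneg h0]
  have h2 := Real.abs_log_sub_add_sum_range_le habs 3
  have h3 := Real.abs_log_sub_add_sum_range_le (x := -t) (by rwa [abs_neg]) 3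
  rw [Finset.sum_range_succ, Finset.sum_range_succ, Finset.sum_range_succ,
    Finset.sum_range_zero] at h2 h3
  rw [abs_neg, abs_of_nonneg h0] at h3
  norm_num at h2 h3
  rw [abs_of_nonneg h0] at h2
  ring_nf at h2 h3
  have hA := abs_le.1 h2
  have hB := abs_le.1 h3
  rw [abs_le]
  ring_nf
  constructor <;> linarith [hA.1, hA.2, hB.1, hB.2]

lemma log_ratio_as_t (x : ℝ) (hx : 1 ≤ x) :
    Real.log ((x+1)/x) = Real.log (1 + 1/(2*x+1)) - Real.log (1 - 1/(2*x+1)) := by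
  have hx0 : 0 < x := by linarith
  have h1 : (0:ℝ) < 2*x+1 := by linarith
  have e1 : Real.log ((x+1)/x) = Real.log (x+1) - Real.log x :=
    Real.log_div (by positivity) hx0.ne'
  have e2 : Real.log (1 + 1/(2*x+1)) = Real.log (2*(x+1)) - Real.log (2*x+1) := by
    rw [show (1:ℝ) + 1/(2*x+1) = (2*(x+1))/(2*x+1) from by field_simp; ring]
    exact Real.log_div (by positivity) h1.ne'
  have e3 : Real.log (1 - 1/(2*x+1)) = Real.log (2*x) - Real.log (2*x+1) := by
    rw [show (1:ℝ) - 1/(2*x+1) = (2*x)/(2*x+1) from by field_simp; ring]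
    exact Real.log_div (by positivity) h1.ne'
  have e4 : Real.log (2*(x+1)) = Real.log 2 + Real.log (x+1) :=
    Real.log_mul two_ne_zero (by positivity)
  have e5 : Real.log (2*x) = Real.log 2 + Real.log x :=
    Real.log_mul two_ne_zero hx0.ne'
  rw [e1, e2, e3, e4, e5]; ring

lemma g_upper (x : ℝ) (hx : 1 ≤ x) : x*(x+1)*Real.log ((x+1)/x) ≤ x + 1/2 := by
  have hx0 : 0 < x := by linarith
  have h1 : (0:ℝ) < 2*x+1 := by linarith
  set t : ℝ := 1/(2*x+1) with ht
  have ht0 : 0 < t := by positivity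
  have ht1 : t < 1 := by rw [ht, div_lt_one h1]; linarith
  have hb := (abs_le.1 (log_ratio_bound t (le_of_lt ht0) ht1)).2
  rw [log_ratio_as_t x hx, ← ht]
  have hxx : (0:ℝ) < x*(x+1) := by positivity
  have hkey : x*(x+1)*(2*t + 2*t^3/3 + 2*t^4/(1-t)) ≤ x + 1/2 := by
    have hid : x + 1/2 - x*(x+1)*(2*t + 2*t^3/3 + 2*t^4/(1-t))
        = (8*x^2+2*x-3)/(6*(2*x+1)^3) := by
      rw [ht, show (1:ℝ) - 1/(2*x+1) = (2*x)/(2*x+1) from by field_simp; ring]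
      field_simp
      ring
    nlinarith [div_nonneg (by nlinarith : (0:ℝ) ≤ 8*x^2+2*x-3) (by positivity : (0:ℝ) ≤ 6*(2*x+1)^3)]
  nlinarith [mul_le_mul_of_nonneg_left hb (le_of_lt hxx)]

lemma g_lower (x : ℝ) (hx : 2 ≤ x) : x + 2/5 ≤ x*(x+1)*Real.log ((x+1)/x) := by
  have hx0 : 0 < x := by linarith
  have h1 : (0:ℝ) < 2*x+1 := by linarith
  set t : ℝ := 1/(2*x+1) with ht
  have ht0 : 0 < t := by positivity
  have ht1 : t < 1 := by rw [ht, div_lt_one h1]; linarith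
  have hb := (abs_le.1 (log_ratio_bound t (le_of_lt ht0) ht1)).1
  rw [log_ratio_as_t x (by linarith), ← ht]
  have hxx : (0:ℝ) < x*(x+1) := by positivity
  have hkey : x + 2/5 ≤ x*(x+1)*(2*t + 2*t^3/3 - 2*t^4/(1-t)) := by
    have hid : x*(x+1)*(2*t + 2*t^3/3 - 2*t^4/(1-t)) - (x + 2/5)
        = (12*x^3-2*x^2-26*x-21)/(15*(2*x+1)^3) := by
      rw [ht, show (1:ℝ) - 1/(2*x+1) = (2*x)/(2*x+1) from by field_simp; ring]
      field_simp
      ring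
    nlinarith [div_nonneg (by nlinarith : (0:ℝ) ≤ 12*x^3-2*x^2-26*x-21)
      (by positivity : (0:ℝ) ≤ 15*(2*x+1)^3)]
  nlinarith [mul_le_mul_of_nonneg_left hb (le_of_lt hxx)]

noncomputable def F (n : ℕ) (M : ℝ) : ℝ := Real.log n + M / n

lemma g_lower_nat (k : ℕ) (hk : 1 ≤ k) :
    (k:ℝ) + (2*Real.log 2 - 1) ≤ (k:ℝ)*((k:ℝ)+1)*Real.log (((k:ℝ)+1)/k) := by
  rcases eq_or_lt_of_le hk with h1 | h2
  · rw [← h1]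
    norm_num
  · have hk2 : (2:ℝ) ≤ (k:ℝ) := by exact_mod_cast h2
    have := g_lower (k:ℝ) hk2
    have hlt := Real.log_two_lt_d9
    linarith

lemma F_step_up (M : ℝ) (k : ℕ) (hk : 1 ≤ k)
    (h : M ≤ (k:ℝ)*((k:ℝ)+1)*Real.log (((k:ℝ)+1)/k)) : F k M ≤ F (k+1) M := by
  have hk0 : (0:ℝ) < k := by exact_mod_cast hk
  have hk1 : (0:ℝ) < (k:ℝ)+1 := by linarith
  unfold F
  push_cast
  have hlog : Real.log (((k:ℝ)+1)/k) = Real.log ((k:ℝ)+1) - Real.log k :=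
    Real.log_div (by positivity) hk0.ne'
  rw [hlog] at h
  have h3 : M/k - M/((k:ℝ)+1) = M/((k:ℝ)*((k:ℝ)+1)) := by field_simp; ring
  have h2 : M/((k:ℝ)*((k:ℝ)+1)) ≤ Real.log ((k:ℝ)+1) - Real.log k := by
    rw [div_le_iff₀ (by positivity)]
    nlinarith
  linarith

lemma F_step_down (M : ℝ) (k : ℕ) (hk : 1 ≤ k)
    (h : (k:ℝ)*((k:ℝ)+1)*Real.log (((k:ℝ)+1)/k) ≤ M) : F (k+1) M ≤ F k M := by
  have hk0 : (0:ℝ) < k := by exact_mod_cast hk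
  have hk1 : (0:ℝ) < (k:ℝ)+1 := by linarith
  unfold F
  push_cast
  have hlog : Real.log (((k:ℝ)+1)/k) = Real.log ((k:ℝ)+1) - Real.log k :=
    Real.log_div (by positivity) hk0.ne'
  rw [hlog] at h
  have h3 : M/k - M/((k:ℝ)+1) = M/((k:ℝ)*((k:ℝ)+1)) := by field_simp; ring
  have h2 : Real.log ((k:ℝ)+1) - Real.log k ≤ M/((k:ℝ)*((k:ℝ)+1)) := by
    rw [le_div_iff₀ (by positivity)]
    nlinarith
  linarith

lemma chain_up (f : ℕ → ℝ) (m : ℕ) (h : ∀ k, m ≤ k → f k ≤ f (k+1)) :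
    ∀ n, m ≤ n → f m ≤ f n := by
  intro n hn
  induction n, hn using Nat.le_induction with
  | base => exact le_refl _
  | succ n hn ih => exact ih.trans (h n hn)

lemma chain_down (f : ℕ → ℝ) :
    ∀ m, (∀ k, 1 ≤ k → k+1 ≤ m → f (k+1) ≤ f k) → ∀ n, 1 ≤ n → n ≤ m → f m ≤ f n := by
  intro m
  induction m with
  | zero => intro _ n h1 h2; omega
  | succ m ih =>
    intro h n h1 h2
    rcases Nat.lt_or_ge n (m+1) with hlt | hge
    · have hnm : n ≤ m := by omega
      have h1m : 1 ≤ m := le_trans h1 hnm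
      exact le_trans (h m h1m le_rfl) (ih (fun k hk hkm => h k hk (by omega)) n h1 hnm)
    · have hn : n = m+1 := by omega
      rw [hn]

theorem fract_determines_minimizer (M : ℝ) (hM : 1 < M) :
    (0 < Int.fract M → Int.fract M < 2 * Real.log 2 - 1 →
      ∀ n : ℕ, 1 ≤ n → F ⌊M⌋₊ M ≤ F n M) ∧
    (1/2 < Int.fract M → Int.fract M < 1 →
      ∀ n : ℕ, 1 ≤ n → F ⌈M⌉₊ M ≤ F n M) := by
  have hM0 : (0:ℝ) ≤ M := by linarith
  set m := ⌊M⌋₊ with hm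
  have hm1 : 1 ≤ m := Nat.le_floor (by exact_mod_cast hM.le)
  have hmle : (m:ℝ) ≤ M := Nat.floor_le hM0
  have hmlt : M < (m:ℝ) + 1 := Nat.lt_floor_add_one M
  have hfr : Int.fract M = M - (m:ℝ) := by
    rw [Int.fract, hm, natCast_floor_eq_intCast_floor hM0]
  have hm1R : (1:ℝ) ≤ (m:ℝ) := by exact_mod_cast hm1
  constructor
  · intro hd1 hd2 n hn
    rcases Nat.le_total n m with hnm | hmn
    · refine chain_down (fun j => F j M) m ?_ n hn hnm
      intro k hk hkm
      refine F_step_down M k hk ?_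
      have hkR : (1:ℝ) ≤ (k:ℝ) := by exact_mod_cast hk
      have hkmR : (k:ℝ) + 1 ≤ (m:ℝ) := by exact_mod_cast hkm
      have := g_upper (k:ℝ) hkR
      linarith
    · refine chain_up (fun j => F j M) m ?_ n hmn
      intro k hk
      refine F_step_up M k (le_trans hm1 hk) ?_
      have hkR : (m:ℝ) ≤ (k:ℝ) := by exact_mod_cast hk
      have := g_lower_nat k (le_trans hm1 hk)
      rw [hfr] at hd2
      linarith
  · intro hd1 hd2 n hn
    rw [hfr] at hd1 hd2
    have hceil : ⌈M⌉₊ = m + 1 := by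
      refine le_antisymm (Nat.ceil_le.2 (by push_cast; linarith)) (Nat.add_one_le_iff.2 ?_)
      exact Nat.lt_ceil.2 (by linarith)
    rw [hceil]
    rcases Nat.le_total n (m+1) with hnm | hmn
    · refine chain_down (fun j => F j M) (m+1) ?_ n hn hnm
      intro k hk hkm
      refine F_step_down M k hk ?_
      have hkR : (1:ℝ) ≤ (k:ℝ) := by exact_mod_cast hk
      have hkmR : (k:ℝ) ≤ (m:ℝ) := by exact_mod_cast (Nat.succ_le_succ_iff.1 hkm)
      have := g_upper (k:ℝ) hkR
      linarith
    · refine chain_up (fun j => F j M) (m+1) ?_ n hmn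
      intro k hk
      refine F_step_up M k (by omega) ?_
      have hkR : (m:ℝ) + 1 ≤ (k:ℝ) := by exact_mod_cast hk
      have := g_lower_nat k (by omega)
      have hlog2 := Real.log_two_gt_d9
      linarith
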